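/- Let G ∈ ℝ^{n×n} be a symmetric positive definite matrix, let I be the n×n identity, and let d > 0. Define F̄(d) = chol(d⁻¹G + I) and F̂ = chol(G). Then λ_n(F̄(d)) ≥ √( d⁻¹·|det(F̂)|^{2/n} + 1 ) = √( d⁻¹·det(G)^{1/n} + 1 ). -/

import Mathlib

open Matrix

noncomputable section

/-- Euclidean norm of a real vector. -/
def euclNorm {m : ℕ} (x : Fin m → ℝ) : ℝ := Real.sqrt (∑ k, x k ^ 2)

/-- The lattice vector `A z` for an integer vector `z`. -/
def latticeVec {m n : ℕ} (A : Matrix (Fin m) (Fin n) ℝ) (z : Fin n → ℤ) : Fin m → ℝ :=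
  A.mulVec fun k => (z k : ℝ)

/-- The `i`-th successive minimum of the lattice generated by `A`: the smallest `r ≥ 0` such
that the closed ball of radius `r` centered at the origin contains `i` linearly independent
lattice vectors. -/
def succMin {m n : ℕ} (A : Matrix (Fin m) (Fin n) ℝ) (i : ℕ) : ℝ :=
  sInf {r : ℝ | 0 ≤ r ∧ ∃ v : Fin i → (Fin n → ℤ),
    LinearIndependent ℝ (fun j => latticeVec A (v j)) ∧
    ∀ j, euclNorm (latticeVec A (v j)) ≤ r}

/-- `R` is the Cholesky factor of `G`: `R` is upper triangular with positive diagonal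
entries and `Rᵀ * R = G`. -/
def IsCholesky {n : ℕ} (G R : Matrix (Fin n) (Fin n) ℝ) : Prop :=
  R.BlockTriangular id ∧ (∀ j, 0 < R j j) ∧ Rᵀ * R = G

/-- Hadamard's inequality, column form. -/
lemma hadamard_cols {n : ℕ} (W : Matrix (Fin n) (Fin n) ℝ) :
    |W.det| ≤ ∏ j, Real.sqrt (∑ k, W k j ^ 2) := by
  haveI : Fact (Module.finrank ℝ (EuclideanSpace ℝ (Fin n)) = n) :=
    ⟨finrank_euclideanSpace_fin⟩
  set v : Fin n → EuclideanSpace ℝ (Fin n) :=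
    fun j => (WithLp.equiv 2 _).symm (fun k => W k j) with hv
  set b := EuclideanSpace.basisFun (Fin n) ℝ with hb
  set o := b.toBasis.orientation with ho
  have h1 : |o.volumeForm v| ≤ ∏ j, ‖v j‖ := o.abs_volumeForm_apply_le v
  have h2 : |o.volumeForm v| = |b.toBasis.det v| := o.volumeForm_robust' b v
  have h3 : b.toBasis.det v = W.det := by
    rw [Module.Basis.det_apply]
    congr 1
  have h4 : ∀ j, ‖v j‖ = Real.sqrt (∑ k, W k j ^ 2) := by
    intro j
    rw [EuclideanSpace.norm_eq]
    congr 1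
    refine Finset.sum_congr rfl fun k _ => ?_
    simp [v, Real.norm_eq_abs, sq_abs]
  calc |W.det| = |o.volumeForm v| := by rw [h2, h3]
    _ ≤ ∏ j, ‖v j‖ := h1
    _ = ∏ j, Real.sqrt (∑ k, W k j ^ 2) := Finset.prod_congr rfl fun j _ => h4 j

/-- `‖R z‖² = zᵀ (Rᵀ R) z`. -/
lemma euclNorm_nonneg {m : ℕ} (x : Fin m → ℝ) : 0 ≤ euclNorm x := Real.sqrt_nonneg _

/-- `‖R z‖² = zᵀ (Rᵀ R) z`. -/
lemma normsq_mulVec {n : ℕ} (R : Matrix (Fin n) (Fin n) ℝ) (z : Fin n → ℝ) :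
    ∑ k, (R *ᵥ z) k ^ 2 = ((Rᵀ * R) *ᵥ z) ⬝ᵥ z := by
  have h1 : ∑ k, (R *ᵥ z) k ^ 2 = (R *ᵥ z) ⬝ᵥ (R *ᵥ z) := by
    simp [dotProduct, sq]
  rw [h1, dotProduct_mulVec, ← mulVec_transpose, mulVec_mulVec, dotProduct_comm]

theorem statement14 {n : ℕ} (hn : 0 < n) (G : Matrix (Fin n) (Fin n) ℝ) (hG : G.PosDef)
    (d : ℝ) (hd : 0 < d) (Fbar Fhat : Matrix (Fin n) (Fin n) ℝ)
    (hFbar : IsCholesky (d⁻¹ • G + 1) Fbar) (hFhat : IsCholesky G Fhat) :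
    succMin Fbar n ≥ Real.sqrt (d⁻¹ * |Fhat.det| ^ ((2 : ℝ) / n) + 1) ∧
    Real.sqrt (d⁻¹ * |Fhat.det| ^ ((2 : ℝ) / n) + 1)
      = Real.sqrt (d⁻¹ * G.det ^ ((1 : ℝ) / n) + 1) := by
  haveI : Nonempty (Fin n) := ⟨⟨0, hn⟩⟩
  have hn' : (n : ℝ) ≠ 0 := Nat.cast_ne_zero.mpr hn.ne'
  have hdetFhat : Fhat.det ^ 2 = G.det := by
    rw [← hFhat.2.2, det_mul, det_transpose, sq]
  have key : |Fhat.det| ^ ((2 : ℝ) / n) = G.det ^ ((1 : ℝ) / n) := by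
    have h2 : (2 : ℝ) / n = 2 * ((1 : ℝ) / n) := by ring
    rw [h2, Real.rpow_mul (abs_nonneg _)]
    congr 1
    rw [show ((2:ℝ) = ((2:ℕ):ℝ)) by norm_num, Real.rpow_natCast, sq_abs, hdetFhat]
  refine ⟨?_, by rw [key]⟩
  rw [ge_iff_le, key]
  unfold succMin
  apply le_csInf
  · -- nonempty: the standard basis vectors give an element of the set
    have hFbarUnit : IsUnit Fbar := by
      refine (Matrix.isUnit_iff_isUnit_det _).mpr (isUnit_iff_ne_zero.mpr ?_)
      rw [det_of_upperTriangular hFbar.1]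
      exact (Finset.prod_pos fun i _ => hFbar.2.1 i).ne'
    have hcol : ∀ j : Fin n, latticeVec Fbar (Pi.single j 1) = Fbarᵀ j := by
      intro j
      funext i
      simp [latticeVec, mulVec, dotProduct, Pi.single_apply, transpose_apply]
    refine ⟨∑ j, euclNorm (latticeVec Fbar (Pi.single j 1)),
      Finset.sum_nonneg fun j _ => Real.sqrt_nonneg _, fun j => Pi.single j 1, ?_, ?_⟩
    · rw [show (fun j : Fin n => latticeVec Fbar (Pi.single j 1)) = fun j => Fbarᵀ j
        from funext hcol]
      exact linearIndependent_cols_iff_isUnit.mpr hFbarUnit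
    · intro j
      exact Finset.single_le_sum
        (f := fun i => euclNorm (latticeVec Fbar (Pi.single i 1)))
        (fun i _ => euclNorm_nonneg _) (Finset.mem_univ j)
  · rintro r ⟨hr, v, hli, hbound⟩
    set zr : Fin n → Fin n → ℝ := fun j k => ((v j k : ℤ) : ℝ) with hzr
    have hlat : ∀ j, latticeVec Fbar (v j) = Fbar *ᵥ zr j := fun j => rfl
    have hznz : ∀ j, zr j ≠ 0 := by
      intro j h
      refine hli.ne_zero j ?_
      rw [hlat, h, mulVec_zero]
    have hsge1 : ∀ j, (1 : ℝ) ≤ ∑ k, zr j k ^ 2 := by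
      intro j
      obtain ⟨k, hk⟩ := Function.ne_iff.mp (hznz j)
      have hvk : v j k ≠ 0 := by
        simpa [zr, Int.cast_eq_zero] using hk
      have h1 : (1 : ℝ) ≤ |zr j k| := by
        have h := Int.one_le_abs hvk
        calc (1:ℝ) = ((1:ℤ):ℝ) := by norm_num
          _ ≤ ((|v j k| : ℤ) : ℝ) := by exact_mod_cast h
          _ = |zr j k| := by push_cast [zr]; rfl
      have h2 : (1 : ℝ) ≤ zr j k ^ 2 := by
        nlinarith [sq_abs (zr j k), abs_nonneg (zr j k)]
      calc (1:ℝ) ≤ zr j k ^ 2 := h2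
        _ ≤ ∑ k, zr j k ^ 2 :=
          Finset.single_le_sum (f := fun i => zr j i ^ 2)
            (fun i _ => sq_nonneg _) (Finset.mem_univ k)
    have hzli : LinearIndependent ℝ zr :=
      LinearIndependent.of_comp Fbar.mulVecLin hli
    set Z : Matrix (Fin n) (Fin n) ℝ := Matrix.of fun k j => zr j k with hZmat
    have hZunit : IsUnit Z := by
      rw [← linearIndependent_cols_iff_isUnit]
      exact hzli
    have hZdetne : Z.det ≠ 0 := by
      intro h
      exact (isUnit_iff_ne_zero.mp ((Matrix.isUnit_iff_isUnit_det Z).mp hZunit)) h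
    have hZdet : (1 : ℝ) ≤ |Z.det| := by
      set Zi : Matrix (Fin n) (Fin n) ℤ := Matrix.of fun k j => v j k with hZi
      have hdz : Z.det = ((Zi.det : ℤ) : ℝ) := by
        rw [show Z = Zi.map (Int.cast : ℤ → ℝ) from by ext k j; simp [Z, Zi, zr]]
        exact (RingHom.map_det (Int.castRingHom ℝ) Zi).symm
      have hne : Zi.det ≠ 0 := by
        intro h
        apply hZdetne
        rw [hdz, h]; norm_num
      rw [hdz]
      calc (1:ℝ) = ((1:ℤ):ℝ) := by norm_num
        _ ≤ ((|Zi.det| : ℤ) : ℝ) := by exact_mod_cast Int.one_le_abs hne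
        _ = |((Zi.det : ℤ) : ℝ)| := by push_cast; rfl
    -- the quadratic form values
    set aj : Fin n → ℝ := fun j => (G *ᵥ zr j) ⬝ᵥ zr j with haj
    have hajf : ∀ j, ∑ k, (Fhat *ᵥ zr j) k ^ 2 = aj j := by
      intro j
      rw [normsq_mulVec, hFhat.2.2]
    have hajnonneg : ∀ j, 0 ≤ aj j := by
      intro j
      rw [← hajf j]
      positivity
    set W : Matrix (Fin n) (Fin n) ℝ := Fhat * Z with hW
    have hWcol : ∀ k j, W k j = (Fhat *ᵥ zr j) k := by
      intro k j
      simp [W, Z, mul_apply, mulVec, dotProduct]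
    have hHad : |W.det| ≤ ∏ j, Real.sqrt (aj j) := by
      refine (hadamard_cols W).trans (le_of_eq ?_)
      refine Finset.prod_congr rfl fun j _ => ?_
      congr 1
      rw [← hajf j]
      exact Finset.sum_congr rfl fun k _ => by rw [hWcol]
    have hGprod : G.det ≤ ∏ j, aj j := by
      have hWdet : W.det = Fhat.det * Z.det := det_mul _ _
      have hW2 : G.det ≤ W.det ^ 2 := by
        rw [hWdet, mul_pow, hdetFhat]
        have h1 : (1:ℝ) ≤ Z.det ^ 2 := by
          nlinarith [sq_abs Z.det, abs_nonneg Z.det]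
        nlinarith [hG.det_pos, h1]
      have hW3 : W.det ^ 2 ≤ (∏ j, Real.sqrt (aj j)) ^ 2 := by
        rw [← sq_abs W.det]
        exact pow_le_pow_left₀ (abs_nonneg _) hHad 2
      have hW4 : (∏ j, Real.sqrt (aj j)) ^ 2 = ∏ j, aj j := by
        rw [← Finset.prod_pow]
        exact Finset.prod_congr rfl fun j _ => Real.sq_sqrt (hajnonneg j)
      linarith
    -- find the index with large quadratic form
    have hne : (Finset.univ : Finset (Fin n)).Nonempty := Finset.univ_nonempty
    obtain ⟨j₀, _, hj₀⟩ := Finset.exists_mem_eq_sup' hne aj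
    have hprodM : ∏ j, aj j ≤ aj j₀ ^ n := by
      calc ∏ j, aj j ≤ ∏ _j : Fin n, aj j₀ :=
            Finset.prod_le_prod (fun i _ => hajnonneg i)
              (fun i _ => hj₀ ▸ Finset.le_sup' aj (Finset.mem_univ i))
        _ = aj j₀ ^ n := by rw [Finset.prod_const, Finset.card_univ, Fintype.card_fin]
    have hMn : G.det ≤ aj j₀ ^ n := hGprod.trans hprodM
    have hMpow : G.det ^ ((1:ℝ)/n) ≤ aj j₀ := by
      have h0 : (0:ℝ) ≤ G.det := hG.det_pos.le
      have h := Real.rpow_le_rpow h0 hMn (by positivity : (0:ℝ) ≤ 1/n)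
      rwa [← Real.rpow_natCast (aj j₀) n, ← Real.rpow_mul (hajnonneg j₀), mul_one_div,
        div_self hn', Real.rpow_one] at h
    -- conclude
    have hnormsq : ∑ k, (Fbar *ᵥ zr j₀) k ^ 2 = d⁻¹ * aj j₀ + ∑ k, zr j₀ k ^ 2 := by
      rw [normsq_mulVec, hFbar.2.2, add_mulVec, one_mulVec, add_dotProduct,
        smul_mulVec, smul_dotProduct, smul_eq_mul]
      congr 1
      simp [dotProduct, sq]
    have hfin : Real.sqrt (d⁻¹ * G.det ^ ((1:ℝ)/n) + 1) ≤ euclNorm (latticeVec Fbar (v j₀)) := by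
      rw [hlat]
      unfold euclNorm
      apply Real.sqrt_le_sqrt
      rw [hnormsq]
      exact add_le_add (mul_le_mul_of_nonneg_left hMpow (inv_nonneg.mpr hd.le)) (hsge1 j₀)
    exact hfin.trans (hbound j₀)
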